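/- For the Cross model viscosity ν, the function s ↦ ν(s)·s is strictly increasing on [0,∞) provided r > 1. (Indeed its derivative is bounded below by a positive constant times ν_∞ wherever differentiable.) -/
import Mathlib


/-- The map s ↦ ν(s)·s is strictly increasing on [0,∞) for the Cross model viscosity. -/
theorem cross_viscosity_mul_strictMono (ν0 νinf K r : ℝ)
    (hνinf : 0 < νinf) (hν : νinf ≤ ν0) (hK : 0 < K) (hr1 : 1 < r) (hr2 : r < 2) :
    StrictMonoOn (fun s : ℝ => (νinf + (ν0 - νinf) / (1 + K * s ^ (2 - r))) * s)
      (Set.Ici (0 : ℝ)) := by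
  intro a ha b hb hab
  simp only [Set.mem_Ici] at ha hb
  set p := 2 - r with hp
  have hp0 : 0 < p := by simp only [hp]; linarith
  have hp1 : p < 1 := by simp only [hp]; linarith
  have hda : 0 < 1 + K * a ^ p := by positivity
  have hdb : 0 < 1 + K * b ^ p := by positivity
  have hb0 : 0 < b := lt_of_le_of_lt ha hab
  have key : a * b ^ p ≤ b * a ^ p := by
    rcases eq_or_lt_of_le ha with h0 | h0
    · rw [← h0]; simp [Real.zero_rpow (ne_of_gt hp0)]
    · have h1 : a ^ (1 - p) ≤ b ^ (1 - p) :=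
        Real.rpow_le_rpow (le_of_lt h0) (le_of_lt hab) (by linarith)
      have ha' : a = a ^ (1 - p) * a ^ p := by
        rw [← Real.rpow_add h0]; simp
      have hb' : b = b ^ (1 - p) * b ^ p := by
        rw [← Real.rpow_add hb0]; simp
      calc a * b ^ p = a ^ (1 - p) * a ^ p * b ^ p := by rw [← ha']
        _ ≤ b ^ (1 - p) * a ^ p * b ^ p := by
            exact mul_le_mul_of_nonneg_right
              (mul_le_mul_of_nonneg_right h1 (Real.rpow_nonneg (le_of_lt h0) p))
              (Real.rpow_nonneg (le_of_lt hb0) p)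
        _ = b * a ^ p := by
            rw [mul_right_comm, ← hb']
  have hmono : a / (1 + K * a ^ p) ≤ b / (1 + K * b ^ p) := by
    rw [div_le_div_iff₀ hda hdb]
    nlinarith
  have hc : 0 ≤ ν0 - νinf := by linarith
  have h1 : (ν0 - νinf) * (a / (1 + K * a ^ p)) ≤ (ν0 - νinf) * (b / (1 + K * b ^ p)) :=
    mul_le_mul_of_nonneg_left hmono hc
  have h2 : νinf * a < νinf * b := mul_lt_mul_of_pos_left hab hνinf
  simp only
  rw [add_mul, add_mul, div_mul_eq_mul_div, div_mul_eq_mul_div, mul_div_assoc, mul_div_assoc]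
  linarith
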